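/- Let k be a field equipped with a family (∂_i)_{i ∈ Δ} of derivations, and let R be a commutative k-algebra that is finitely generated as a k-algebra and has no zero divisors, equipped with a family (D_i)_{i ∈ Δ} of derivations extending those of k (i.e. D_i(algebraMap c) = algebraMap(∂_i c) for all c ∈ k and all i). Assume R is simple (its only Δ-ideals are (0) and R). Then every constant f ∈ R (i.e. D_i f = 0 for all i) is algebraic over the constant subfield C(k) = {c ∈ k : ∂_i c = 0 for all i}: there exists a nonzero polynomial with coefficients in C(k) annihilating f. -/

import Mathlib

open Polynomial

universe u

set_option maxHeartbeats 1000000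
set_option synthInstance.maxHeartbeats 400000

/-- One-generator extension lemma: primes of `A` avoiding a suitable nonzero `a`
lift to primes of `A[x]` avoiding a given nonzero `a'`. -/
theorem step_lemma {A B : Type u} [CommRing A] [CommRing B] [IsDomain A] [IsDomain B]
    [Algebra A B] (hinj : Function.Injective (algebraMap A B)) (x : B)
    (a' : Algebra.adjoin A ({x} : Set B)) (ha' : a' ≠ 0) :
    ∃ a : A, a ≠ 0 ∧ ∀ P : Ideal A, P.IsPrime → a ∉ P →
      ∃ P' : Ideal (Algebra.adjoin A ({x} : Set B)), P'.IsPrime ∧ a' ∉ P' ∧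
        P'.comap (algebraMap A (Algebra.adjoin A ({x} : Set B))) = P := by
  by_cases halg : ∃ p : A[X], p ≠ 0 ∧ aeval x p = 0
  · obtain ⟨p, hp0, hpx⟩ := halg
    set lam := p.leadingCoeff with hlamdef
    have hlam : lam ≠ 0 := mt leadingCoeff_eq_zero.mp hp0
    set lamB := algebraMap A B lam with hlamBdef
    have hzint : IsIntegral A (lamB * x) :=
      ⟨p.integralNormalization, monic_integralNormalization hp0,
        integralNormalization_aeval_eq_zero hpx fun u hu => hinj (by simpa using hu)⟩
    set Cz := Algebra.adjoin A ({lamB * x} : Set B) with hCzdef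
    have hCfg : Cz.toSubmodule.FG := by
      refine fg_adjoin_of_finite (Set.finite_singleton _) ?_
      rintro y hy
      rw [Set.mem_singleton_iff] at hy
      rw [hy]; exact hzint
    haveI : Module.Finite A Cz := ⟨(Submodule.fg_top _).mpr hCfg⟩
    have hinjC : Function.Injective (algebraMap A Cz) := by
      intro u v huv
      apply hinj
      have := congrArg (Subtype.val) huv
      simpa using this
    have hlamCz : lamB ∈ Cz := Cz.algebraMap_mem lam
    have habs : ∀ (y : B) (m m' : ℕ), m ≤ m' → lamB ^ m * y ∈ Cz → lamB ^ m' * y ∈ Cz := by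
      intro y m m' hmm hy
      have h2 : lamB ^ (m' - m) * (lamB ^ m * y) ∈ Cz :=
        Cz.mul_mem (Cz.pow_mem hlamCz _) hy
      rwa [← mul_assoc, ← pow_add, Nat.sub_add_cancel hmm] at h2
    have hpow : ∀ y ∈ Algebra.adjoin A ({x} : Set B), ∃ m : ℕ, lamB ^ m * y ∈ Cz := by
      intro y hy
      induction hy using Algebra.adjoin_induction with
      | mem z hz =>
        rw [Set.mem_singleton_iff] at hz; subst hz
        exact ⟨1, by rw [pow_one]; exact Algebra.self_mem_adjoin_singleton A (lamB * z)⟩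
      | algebraMap r => exact ⟨0, by simpa using Cz.algebraMap_mem r⟩
      | add y₁ y₂ h₁ h₂ ih₁ ih₂ =>
        obtain ⟨m₁, hm₁⟩ := ih₁; obtain ⟨m₂, hm₂⟩ := ih₂
        refine ⟨max m₁ m₂, ?_⟩
        rw [mul_add]
        exact Cz.add_mem (habs _ _ _ (le_max_left _ _) hm₁) (habs _ _ _ (le_max_right _ _) hm₂)
      | mul y₁ y₂ h₁ h₂ ih₁ ih₂ =>
        obtain ⟨m₁, hm₁⟩ := ih₁; obtain ⟨m₂, hm₂⟩ := ih₂
        refine ⟨m₁ + m₂, ?_⟩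
        have heq : lamB ^ (m₁ + m₂) * (y₁ * y₂) = (lamB ^ m₁ * y₁) * (lamB ^ m₂ * y₂) := by
          rw [pow_add]; ring
        rw [heq]; exact Cz.mul_mem hm₁ hm₂
    -- a' is algebraic over A
    obtain ⟨m₀, hm₀⟩ := hpow (a' : B) a'.2
    have hwint : IsIntegral A (lamB ^ m₀ * (a' : B)) := IsIntegral.of_mem_of_fg Cz hCfg _ hm₀
    obtain ⟨g, hg0, hgw⟩ := hwint.isAlgebraic
    have hvalalg : IsAlgebraic A ((a' : B)) := by
      refine ⟨g.comp (C (lam ^ m₀) * X), ?_, ?_⟩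
      · intro h
        rcases comp_eq_zero_iff.mp h with h1 | ⟨-, h3⟩
        · exact hg0 h1
        · have h4 := congrArg (fun q => coeff q 1) h3
          simp [coeff_C] at h4
          rw [← map_pow, coeff_C_zero] at h4
          exact pow_ne_zero m₀ hlam h4
      · rw [aeval_comp]
        have : (aeval (a' : B)) (C (lam ^ m₀) * X) = lamB ^ m₀ * (a' : B) := by
          simp [map_pow, hlamBdef]
        rw [this]; exact hgw
    have ha'alg : IsAlgebraic A a' := by
      obtain ⟨G, hG0, hGv⟩ := hvalalg
      refine ⟨G, hG0, ?_⟩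
      have hval := Polynomial.aeval_algHom_apply
        (Algebra.adjoin A ({x} : Set B)).val a' G
      simp only [Subalgebra.coe_val] at hval
      have hz : ((aeval a' G : Algebra.adjoin A ({x} : Set B)) : B) = 0 := by
        rw [← hval]; exact hGv
      exact Subtype.coe_injective (by simpa using hz)
    obtain ⟨r, hr0, hdvd⟩ := ha'alg.exists_nonzero_dvd (mem_nonZeroDivisors_of_ne_zero ha')
    obtain ⟨u, hu⟩ := hdvd
    refine ⟨lam * r, mul_ne_zero hlam hr0, ?_⟩
    intro P hP haP
    haveI : P.IsPrime := hP
    have hlamP : lam ∉ P := fun h => haP (Ideal.mul_mem_right _ _ h)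
    have hrP : r ∉ P := fun h => haP (Ideal.mul_mem_left _ _ h)
    obtain ⟨Qc, -, hQcp, hQcc⟩ := Ideal.exists_ideal_over_prime_of_isIntegral (S := Cz) P ⊥ (by
      intro w hw
      have hw0 : algebraMap A Cz w = 0 := by simpa using hw
      have : w = 0 := hinjC (by rw [hw0, map_zero])
      rw [this]; exact P.zero_mem)
    -- the saturation ideal
    set MQ : B → Prop := fun w => ∃ h : w ∈ Cz, (⟨w, h⟩ : Cz) ∈ Qc with hMQdef
    have hMQadd : ∀ {w v : B}, MQ w → MQ v → MQ (w + v) := by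
      rintro w v ⟨hw, hw'⟩ ⟨hv, hv'⟩
      exact ⟨Cz.add_mem hw hv, Qc.add_mem hw' hv'⟩
    have hMQmul : ∀ {w v : B}, w ∈ Cz → MQ v → MQ (w * v) := by
      rintro w v hw ⟨hv, hv'⟩
      exact ⟨Cz.mul_mem hw hv, Qc.mul_mem_left ⟨w, hw⟩ hv'⟩
    have hMQabs : ∀ {v : B} (m m' : ℕ), m ≤ m' → MQ (lamB ^ m * v) → MQ (lamB ^ m' * v) := by
      intro v m m' hmm h
      have h2 : MQ (lamB ^ (m' - m) * (lamB ^ m * v)) := hMQmul (Cz.pow_mem hlamCz _) h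
      rwa [← mul_assoc, ← pow_add, Nat.sub_add_cancel hmm] at h2
    set P' : Ideal (Algebra.adjoin A ({x} : Set B)) :=
      { carrier := {y | ∃ m : ℕ, MQ (lamB ^ m * (y : B))}
        add_mem' := by
          rintro y z ⟨m₁, h₁⟩ ⟨m₂, h₂⟩
          refine ⟨max m₁ m₂, ?_⟩
          have hyz : ((y + z : Algebra.adjoin A ({x} : Set B)) : B) = (y : B) + (z : B) := rfl
          rw [hyz, mul_add]
          exact hMQadd (hMQabs _ _ (le_max_left _ _) h₁) (hMQabs _ _ (le_max_right _ _) h₂)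
        zero_mem' := by
          refine ⟨0, ?_⟩
          have h0 : (lamB ^ 0 * (((0 : Algebra.adjoin A ({x} : Set B))) : B)) = 0 := by simp
          rw [h0]
          refine ⟨Cz.zero_mem, ?_⟩
          have he : (⟨(0 : B), Cz.zero_mem⟩ : Cz) = 0 := rfl
          rw [he]; exact Qc.zero_mem
        smul_mem' := by
          rintro c y ⟨m, hm⟩
          obtain ⟨mc, hmc⟩ := hpow (c : B) c.2
          refine ⟨mc + m, ?_⟩
          have hcy : ((c * y : Algebra.adjoin A ({x} : Set B)) : B) = (c : B) * (y : B) := rfl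
          have heq : lamB ^ (mc + m) * ((c : B) * (y : B))
              = (lamB ^ mc * (c : B)) * (lamB ^ m * (y : B)) := by rw [pow_add]; ring
          rw [smul_eq_mul, hcy, heq]
          exact hMQmul hmc hm } with hP'def
    have hcomap : P'.comap (algebraMap A (Algebra.adjoin A ({x} : Set B))) = P := by
      ext c
      simp only [Ideal.mem_comap]
      constructor
      · rintro ⟨m, hm, hQ⟩
        have hsub : (⟨lamB ^ m * ((algebraMap A (Algebra.adjoin A ({x} : Set B)) c : B)), hm⟩ : Cz)
            = algebraMap A Cz (lam ^ m * c) := by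
          apply Subtype.ext
          simp [map_mul, map_pow, hlamBdef]
        rw [hsub] at hQ
        have hmemP : lam ^ m * c ∈ P := by
          rw [← hQcc]; exact Ideal.mem_comap.mpr hQ
        rcases hP.mem_or_mem hmemP with h | h
        · exact absurd (hP.mem_of_pow_mem _ h) hlamP
        · exact h
      · intro hc
        have hmem : (algebraMap A B c) ∈ Cz := Cz.algebraMap_mem c
        refine ⟨0, ?_⟩
        have hval : ((algebraMap A (Algebra.adjoin A ({x} : Set B)) c : B)) = algebraMap A B c := by
          simp
        rw [pow_zero, one_mul, hval]
        refine ⟨hmem, ?_⟩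
        have hsub : (⟨algebraMap A B c, hmem⟩ : Cz) = algebraMap A Cz c := by
          apply Subtype.ext; simp
        rw [hsub]
        exact Ideal.mem_comap.mp (hQcc ▸ hc)
    have hP'prime : P'.IsPrime := by
      constructor
      · intro htop
        have h1 : (1 : (Algebra.adjoin A ({x} : Set B))) ∈ P' := htop ▸ Submodule.mem_top
        obtain ⟨m, hm, hQ⟩ := h1
        have hsub : (⟨lamB ^ m * ((1 : (Algebra.adjoin A ({x} : Set B))) : B), hm⟩ : Cz)
            = algebraMap A Cz (lam ^ m) := by
          apply Subtype.ext; simp [map_pow, hlamBdef]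
        rw [hsub] at hQ
        have : lam ^ m ∈ P := by rw [← hQcc]; exact Ideal.mem_comap.mpr hQ
        exact hlamP (hP.mem_of_pow_mem _ this)
      · rintro y z ⟨m, hprod⟩
        obtain ⟨m₁, h₁⟩ := hpow (y : B) y.2
        obtain ⟨m₂, h₂⟩ := hpow (z : B) z.2
        have hyz : ((y * z : Algebra.adjoin A ({x} : Set B)) : B) = (y : B) * (z : B) := rfl
        rw [hyz] at hprod
        have hbig : MQ (lamB ^ (m + (m₁ + m₂)) * ((y : B) * (z : B))) :=
          hMQabs _ _ (Nat.le_add_right _ _) hprod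
        have heq : lamB ^ (m + (m₁ + m₂)) * ((y : B) * (z : B))
            = (lamB ^ m₁ * (y : B)) * ((lamB ^ m₂ * (z : B)) * lamB ^ m) := by
          rw [pow_add, pow_add]; ring
        rw [heq] at hbig
        obtain ⟨hmem, hQ⟩ := hbig
        have hfac : (⟨(lamB ^ m₁ * (y : B)) * ((lamB ^ m₂ * (z : B)) * lamB ^ m), hmem⟩ : Cz)
            = (⟨lamB ^ m₁ * (y : B), h₁⟩ : Cz) *
              ((⟨lamB ^ m₂ * (z : B), h₂⟩ : Cz) * algebraMap A Cz (lam ^ m)) := by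
          apply Subtype.ext; simp [map_pow, hlamBdef]
        rw [hfac] at hQ
        rcases hQcp.mem_or_mem hQ with h | h
        · exact Or.inl ⟨m₁, h₁, h⟩
        · rcases hQcp.mem_or_mem h with h' | h'
          · exact Or.inr ⟨m₂, h₂, h'⟩
          · exfalso
            have : lam ^ m ∈ P := by rw [← hQcc]; exact Ideal.mem_comap.mpr h'
            exact hlamP (hP.mem_of_pow_mem _ this)
    refine ⟨P', hP'prime, ?_, hcomap⟩
    intro ha'P
    have : algebraMap A (Algebra.adjoin A ({x} : Set B)) r ∈ P' := by
      rw [hu]; exact Ideal.mul_mem_right _ _ ha'P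
    exact hrP (hcomap ▸ Ideal.mem_comap.mpr this)
  · -- x transcendental over A
    have hainj : Function.Injective (aeval x : A[X] →ₐ[A] B) := by
      rw [injective_iff_map_eq_zero]
      intro p hp
      by_contra h0
      exact halg ⟨p, h0, hp⟩
    let e : A[X] ≃ₐ[A] Algebra.adjoin A ({x} : Set B) :=
      (AlgEquiv.ofInjective _ hainj).trans
        (Subalgebra.equivOfEq _ _ (Algebra.adjoin_singleton_eq_range_aeval A x).symm)
    set q : A[X] := e.symm a' with hq
    have hq0 : q ≠ 0 := by
      intro h
      apply ha'
      rw [← e.apply_symm_apply a', ← hq, h, map_zero]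
    refine ⟨q.leadingCoeff, mt leadingCoeff_eq_zero.mp hq0, ?_⟩
    intro P hP haP
    set Pc : Ideal A[X] := Ideal.map (C : A →+* A[X]) P with hPc
    haveI : Pc.IsPrime := by
      haveI : IsDomain (A ⧸ P) := (Ideal.Quotient.isDomain_iff_prime P).mpr hP
      have hdom : IsDomain (A[X] ⧸ Pc) := by
        exact Function.Injective.isDomain
          (Ideal.polynomialQuotientEquivQuotientPolynomial P).symm.toRingHom
          (Ideal.polynomialQuotientEquivQuotientPolynomial P).symm.injective
      exact (Ideal.Quotient.isDomain_iff_prime Pc).mp hdom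
    refine ⟨Ideal.comap (e.symm : Algebra.adjoin A ({x} : Set B) ≃+* A[X]).toRingHom Pc,
      Ideal.IsPrime.comap _, ?_, ?_⟩
    · intro hmem
      have : q ∈ Pc := hmem
      rw [Ideal.mem_map_C_iff] at this
      exact haP (by simpa using this q.natDegree)
    · ext c
      simp only [Ideal.mem_comap]
      have hc : (e.symm : Algebra.adjoin A ({x} : Set B) ≃+* A[X]).toRingHom
          (algebraMap A (Algebra.adjoin A ({x} : Set B)) c) = C c := by
        change e.symm (algebraMap A _ c) = C c
        rw [AlgEquiv.commutes]
        rfl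
      rw [hc, Ideal.mem_map_C_iff]
      constructor
      · intro h
        simpa using h 0
      · intro h n
        rcases eq_or_ne n 0 with rfl | hn
        · simpa using h
        · simp [coeff_C, hn]

/-- Induction: over a domain `A`, in a finitely generated domain extension `B`,
primes of `A` avoiding a suitable nonzero `a` lift to primes of `B` avoiding `b`. -/
theorem gen_lift (n : ℕ) :
    ∀ {B : Type u} [CommRing B] [IsDomain B] {A : Type u} [CommRing A] [IsDomain A]
      [Algebra A B], Function.Injective (algebraMap A B) →
      ∀ s : Finset B, s.card = n → Algebra.adjoin A (s : Set B) = ⊤ →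
      ∀ b : B, b ≠ 0 →
      ∃ a : A, a ≠ 0 ∧ ∀ P : Ideal A, P.IsPrime → a ∉ P →
        ∃ Q : Ideal B, Q.IsPrime ∧ b ∉ Q ∧ Q.comap (algebraMap A B) = P := by
  induction n with
  | zero =>
    intro B _ _ A _ _ _ hinj s hcard hs b hb
    have hse : (s : Set B) = ∅ := by
      rw [Finset.card_eq_zero.mp hcard]; simp
    rw [hse, Algebra.adjoin_empty] at hs
    have hsurj : Function.Surjective (algebraMap A B) := by
      intro y
      have : y ∈ (⊥ : Subalgebra A B) := hs ▸ trivial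
      rwa [Algebra.mem_bot] at this
    let e : A ≃+* B := RingEquiv.ofBijective (algebraMap A B) ⟨hinj, hsurj⟩
    refine ⟨e.symm b, ?_, ?_⟩
    · intro h
      apply hb
      rw [← e.apply_symm_apply b, h, map_zero]
    · intro P hP haP
      refine ⟨P.comap e.symm.toRingHom, Ideal.IsPrime.comap _, haP, ?_⟩
      have hcomp : e.symm.toRingHom.comp (algebraMap A B) = RingHom.id A := by
        ext a; exact e.symm_apply_apply a
      rw [Ideal.comap_comap, hcomp, Ideal.comap_id]
  | succ n ih =>
    intro B _ _ A _ _ _ hinj s hcard hs b hb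
    classical
    obtain ⟨x, t, hxt, rfl, htcard⟩ := Finset.card_eq_succ.mp hcard
    set A' := Algebra.adjoin A ({x} : Set B) with hA'
    have hinj' : Function.Injective (algebraMap A' B) := Subtype.val_injective
    have hadj : Algebra.adjoin A' (t : Set B) = ⊤ := by
      rw [Finset.coe_insert, Set.insert_eq, Algebra.adjoin_union_eq_adjoin_adjoin] at hs
      rw [eq_top_iff]
      intro y _
      have : y ∈ Subalgebra.restrictScalars A (Algebra.adjoin A' (t : Set B)) := by
        rw [hs]; trivial
      rwa [Subalgebra.mem_restrictScalars] at this
    obtain ⟨a', ha'0, ha'⟩ := ih hinj' t htcard hadj b hb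
    obtain ⟨a, ha0, ha⟩ := step_lemma hinj x a' ha'0
    refine ⟨a, ha0, ?_⟩
    intro P hP haP
    obtain ⟨P', hP'p, ha'P', hP'c⟩ := ha P hP haP
    obtain ⟨Q, hQp, hbQ, hQc⟩ := ha' P' hP'p ha'P'
    refine ⟨Q, hQp, hbQ, ?_⟩
    rw [IsScalarTower.algebraMap_eq A A' B, ← Ideal.comap_comap, hQc, hP'c]

/-- If `R` is a finitely generated domain over a field `k` and `f` is transcendental
over `k`, then `f - c` is a unit for only finitely many `c : k`. -/
theorem finite_units_of_transcendental {k : Type v} {R : Type u} [Field k] [CommRing R]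
    [IsDomain R] [Algebra k R] [Algebra.FiniteType k R] {f : R} (htr : ¬IsAlgebraic k f) :
    {c : k | IsUnit (f - algebraMap k R c)}.Finite := by
  set A₀ := Algebra.adjoin k ({f} : Set R) with hA₀
  have hainj : Function.Injective (Polynomial.aeval f : Polynomial k →ₐ[k] R) := by
    rw [injective_iff_map_eq_zero]
    intro p hp
    by_contra h0
    exact htr ⟨p, h0, hp⟩
  let e₀ : Polynomial k ≃ₐ[k] A₀ :=
    (AlgEquiv.ofInjective _ hainj).trans
      (Subalgebra.equivOfEq _ _ (Algebra.adjoin_singleton_eq_range_aeval k f).symm)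
  have hTinj : Function.Injective (algebraMap A₀ R) := Subtype.val_injective
  obtain ⟨s, hs⟩ := (inferInstance : Algebra.FiniteType k R).out
  have hadj : Algebra.adjoin A₀ (s : Set R) = ⊤ := by
    rw [eq_top_iff]
    intro y _
    have hy : y ∈ Algebra.adjoin k (s : Set R) := hs ▸ trivial
    have hle : Algebra.adjoin k (s : Set R) ≤
        Subalgebra.restrictScalars k (Algebra.adjoin A₀ (s : Set R)) :=
      Algebra.adjoin_le fun z hz => Algebra.subset_adjoin hz
    exact hle hy
  obtain ⟨a, ha0, hMAIN⟩ := gen_lift s.card hTinj s rfl hadj 1 one_ne_zero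
  set g : Polynomial k := e₀.symm a with hg
  have hg0 : g ≠ 0 := by
    intro h
    apply ha0
    rw [← e₀.apply_symm_apply a, ← hg, h, map_zero]
  refine Set.Finite.subset (Polynomial.finite_setOf_isRoot hg0) ?_
  intro c hc
  by_contra hroot
  have hrootne : Polynomial.eval c g ≠ 0 := hroot
  -- the prime ideal of A₀ corresponding to X - C c
  set Pc : Ideal A₀ :=
    Ideal.comap (e₀.symm : A₀ ≃+* Polynomial k).toRingHom
      (RingHom.ker (Polynomial.evalRingHom c)) with hPc
  haveI hkerp : (RingHom.ker (Polynomial.evalRingHom c)).IsPrime :=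
    RingHom.ker_isPrime _
  have hPcprime : Pc.IsPrime := Ideal.IsPrime.comap _
  have haPc : a ∉ Pc := by
    intro hmem
    have : Polynomial.eval c g = 0 := hmem
    exact hrootne this
  obtain ⟨Q, hQp, -, hQc⟩ := hMAIN Pc hPcprime haPc
  -- f - c lies in Q
  set fa : A₀ := ⟨f, Algebra.self_mem_adjoin_singleton k f⟩ with hfa
  have hfc : fa - algebraMap k A₀ c ∈ Pc := by
    have h1 : e₀.symm fa = Polynomial.X := by
      have h2 : e₀ Polynomial.X = fa := by
        apply Subtype.coe_injective
        simp [e₀, fa, AlgEquiv.ofInjective]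
      rw [← h2, AlgEquiv.symm_apply_apply]
    have h3 : e₀.symm (algebraMap k A₀ c) = Polynomial.C c := by
      rw [AlgEquiv.commutes]; rfl
    show e₀.symm (fa - algebraMap k A₀ c) ∈ RingHom.ker (Polynomial.evalRingHom c)
    rw [map_sub, h1, h3]
    simp [RingHom.mem_ker]
  have hfQ : f - algebraMap k R c ∈ Q := by
    have : algebraMap A₀ R (fa - algebraMap k A₀ c) ∈ Q := by
      rw [← hQc] at hfc
      exact hfc
    have hval : algebraMap A₀ R (fa - algebraMap k A₀ c) = f - algebraMap k R c := by
      rw [map_sub]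
      congr 1
    rwa [hval] at this
  exact hQp.ne_top (Ideal.eq_top_of_isUnit_mem Q hfQ hc)

/-- Let `k` be a `Δ`-field and let `R` be a finitely generated `k`-`Δ`-algebra without
zero divisors (the derivations `D i` of `R` extend the derivations `dk i` of `k`).
If `R` is a simple `Δ`-ring, then every constant `f` of `R` is algebraic over the
field of constants of `k`: there is a nonzero polynomial, all of whose coefficients
are constants of `k`, annihilating `f`. -/
theorem stmt_16 {k R Δ : Type*} [Field k] [CommRing R] [Algebra k R]
    [Algebra.FiniteType k R] [NoZeroDivisors R]
    (dk : Δ → Derivation ℤ k k) (D : Δ → Derivation ℤ R R)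
    (hcompat : ∀ i (c : k), D i (algebraMap k R c) = algebraMap k R (dk i c))
    (hsimple : ∀ I : Ideal R, (∀ i, ∀ x ∈ I, D i x ∈ I) → I = ⊥ ∨ I = ⊤)
    (f : R) (hf : ∀ i, D i f = 0) :
    ∃ p : Polynomial k, p ≠ 0 ∧ (∀ n, ∀ i, dk i (p.coeff n) = 0) ∧
      Polynomial.aeval f p = 0 := by
  rcases subsingleton_or_nontrivial R with hss | hnt
  · refine ⟨Polynomial.X, Polynomial.X_ne_zero, ?_, Subsingleton.elim _ _⟩
    intro n i
    rcases eq_or_ne n 1 with rfl | hn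
    · simp
    · simp [Polynomial.coeff_X, Ne.symm hn]
  haveI : IsDomain R := NoZeroDivisors.to_isDomain R
  -- every nonzero constant of R is a unit
  have hUnit : ∀ g : R, (∀ i, D i g = 0) → g ≠ 0 → IsUnit g := by
    intro g hg hg0
    have hI : ∀ i, ∀ y ∈ Ideal.span {g}, D i y ∈ Ideal.span {g} := by
      intro i y hy
      rw [Ideal.mem_span_singleton'] at hy ⊢
      obtain ⟨r, rfl⟩ := hy
      refine ⟨D i r, ?_⟩
      rw [Derivation.leibniz, hg i]
      simp [smul_eq_mul, mul_comm]
    rcases hsimple _ hI with h | h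
    · exfalso
      apply hg0
      have : g ∈ (⊥ : Ideal R) := h ▸ Ideal.mem_span_singleton_self g
      simpa using this
    · rwa [Ideal.span_singleton_eq_top] at h
  -- f is algebraic over k
  have HA : IsAlgebraic k f := by
    haveI : CharP k (ringChar k) := ringChar.charP k
    rcases CharP.char_is_prime_or_zero k (ringChar k) with hp | h0
    · -- positive characteristic: R is a field, apply Zariski's lemma
      haveI : CharP R (ringChar k) :=
        charP_of_injective_algebraMap (algebraMap k R).injective (ringChar k)
      have hfield : IsField R := by
        refine ⟨exists_pair_ne R, mul_comm, ?_⟩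
        intro r hr
        have hconst : ∀ i, D i (r ^ ringChar k) = 0 := by
          intro i
          rw [Derivation.leibniz_pow, nsmul_eq_mul, CharP.cast_eq_zero R, zero_mul]
        have hu : IsUnit (r ^ ringChar k) := hUnit _ hconst (pow_ne_zero _ hr)
        have hru : IsUnit r := (isUnit_pow_iff hp.ne_zero).mp hu
        obtain ⟨u, hu'⟩ := hru
        exact ⟨↑u⁻¹, by rw [← hu']; exact u.mul_inv⟩
      letI : Field R := hfield.toField
      haveI : Module.Finite k R := finite_of_finite_type_of_isJacobsonRing k R
      have hint : IsIntegral k f := Algebra.IsIntegral.isIntegral f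
      exact hint.isAlgebraic
    · -- characteristic zero: use rational constants
      haveI : CharP k 0 := h0 ▸ ringChar.charP k
      haveI : CharZero k := CharP.charP_to_charZero k
      by_contra htr
      have hfin := finite_units_of_transcendental (k := k) (R := R) htr
      have hdkq : ∀ (d : Derivation ℤ k k) (q : ℚ), d (q : k) = 0 := by
        intro d q
        have hden : ((q.den : k)) ≠ 0 := Nat.cast_ne_zero.mpr q.den_nz
        have hint : ∀ n : ℤ, d (n : k) = 0 := fun n => d.map_intCast n
        have hnat : d (q.den : k) = 0 := by
          have hc : ((q.den : ℤ) : k) = (q.den : k) := by push_cast; ring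
          rw [← hc]; exact hint _
        have hinv : d ((q.den : k)⁻¹) = 0 := by
          have h1 : (q.den : k) * (q.den : k)⁻¹ = 1 := mul_inv_cancel₀ hden
          have h2 := d.leibniz ((q.den : k)) ((q.den : k)⁻¹)
          rw [h1, Derivation.map_one_eq_zero, hnat, smul_zero, add_zero, smul_eq_mul] at h2
          rcases mul_eq_zero.mp h2.symm with h3 | h3
          · exact absurd h3 hden
          · exact h3

        have hq : (q : k) = (q.num : k) * ((q.den : k))⁻¹ := by
          rw [Rat.cast_def, div_eq_mul_inv]
        rw [hq, d.leibniz, hinv]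
        have : d ((q.num : k)) = 0 := hint q.num
        rw [this]
        simp
      have hsub : Set.range (fun q : ℚ => (q : k)) ⊆
          {c : k | IsUnit (f - algebraMap k R c)} := by
        rintro c ⟨q, rfl⟩
        have hconst : ∀ i, D i (f - algebraMap k R (q : k)) = 0 := by
          intro i
          rw [map_sub, hf i, hcompat, hdkq (dk i) q, map_zero, zero_sub, neg_zero]
        have hne : f - algebraMap k R (q : k) ≠ 0 := by
          intro h
          apply htr
          rw [sub_eq_zero] at h
          rw [h]
          exact isAlgebraic_algebraMap _
        exact hUnit _ hconst hne
      have hinf : (Set.range (fun q : ℚ => (q : k))).Infinite :=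
        Set.infinite_range_of_injective Rat.cast_injective
      exact hinf (hfin.subset hsub)
  -- the minimal polynomial has constant coefficients
  have hInt : IsIntegral k f := HA.isIntegral
  set P := minpoly k f with hPdef
  have hP0 : P ≠ 0 := minpoly.ne_zero hInt
  have hPev : Polynomial.aeval f P = 0 := minpoly.aeval k f
  refine ⟨P, hP0, ?_, hPev⟩
  intro n i
  set n₀ := P.natDegree with hn₀
  set q : Polynomial k :=
    ∑ j ∈ Finset.range (n₀ + 1), Polynomial.C (dk i (P.coeff j)) * Polynomial.X ^ j with hqdef
  have hqcoeff : ∀ m, q.coeff m = if m ≤ n₀ then dk i (P.coeff m) else 0 := by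
    intro m
    rw [hqdef, Polynomial.finset_sum_coeff]
    simp only [Polynomial.coeff_C_mul, Polynomial.coeff_X_pow, mul_ite, mul_one, mul_zero]
    rw [Finset.sum_ite_eq (Finset.range (n₀ + 1)) m (fun j => dk i (P.coeff j))]
    simp [Nat.lt_succ_iff]
  have hDaeval : Polynomial.aeval f q = 0 := by
    have h1 : Polynomial.aeval f P = ∑ j ∈ Finset.range (n₀ + 1), P.coeff j • f ^ j :=
      Polynomial.aeval_eq_sum_range f
    have h2 : D i (Polynomial.aeval f P) = 0 := by rw [hPev, map_zero]
    rw [h1, map_sum] at h2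
    have h3 : ∀ j ∈ Finset.range (n₀ + 1),
        D i (P.coeff j • f ^ j) = algebraMap k R (dk i (P.coeff j)) * f ^ j := by
      intro j _
      rw [Algebra.smul_def, Derivation.leibniz, Derivation.leibniz_pow, hf i]
      rw [hcompat]
      simp [smul_eq_mul, mul_comm]
    rw [Finset.sum_congr rfl h3] at h2
    have h4 : Polynomial.aeval f q
        = ∑ j ∈ Finset.range (n₀ + 1), algebraMap k R (dk i (P.coeff j)) * f ^ j := by
      rw [hqdef, map_sum]
      refine Finset.sum_congr rfl ?_
      intro j _
      rw [map_mul, Polynomial.aeval_C, map_pow, Polynomial.aeval_X]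
    rw [h4, h2]
  have hq0 : q = 0 := by
    by_contra hqne
    have hlt : q.degree < P.degree := by
      have hdeg : q.degree < (n₀ : WithBot ℕ) := by
        rw [Polynomial.degree_lt_iff_coeff_zero]
        intro m hm
        rw [hqcoeff m]
        rcases eq_or_lt_of_le hm with rfl | hlt'
        · have hmonic : P.coeff n₀ = 1 := (minpoly.monic hInt)
          simp [hmonic]
        · rw [if_neg (by omega)]
      calc q.degree < (n₀ : WithBot ℕ) := hdeg
        _ = P.degree := (Polynomial.degree_eq_natDegree hP0).symm
    exact absurd (minpoly.degree_le_of_ne_zero k f hqne hDaeval) (not_le.mpr hlt)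
  by_cases hn : n ≤ n₀
  · have h := congrArg (fun p => Polynomial.coeff p n) hq0
    simp only [Polynomial.coeff_zero] at h
    rw [hqcoeff n, if_pos hn] at h
    exact h
  · have hc : P.coeff n = 0 := Polynomial.coeff_eq_zero_of_natDegree_lt (by omega)
    rw [hc, map_zero]
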